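/- For the information-flow register machine, the well-stamped invariant is preserved by execution: if a machine state S is well-stamped and S steps to S', then S' is well-stamped. -/

import Mathlib

/-! ## The information-flow register machine, over a label lattice -/

/-- Block identifiers: a stamp label and an integer index. -/
abbrev Bid (Lab : Type) := Lab × ℕ

/-- Values: integers, first-class labels, or pointers. -/
inductive Val (Lab : Type) where
  | int (n : Int)
  | lab (ℓ : Lab)
  | ptr (b : Bid Lab) (o : Int)
deriving DecidableEq

/-- A labeled value `v@ℓ`. -/
structure Atom (Lab : Type) where
  val : Val Lab
  lab : Lab
deriving DecidableEq

/-- A labeled program counter `n@ℓ`. -/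
structure LPC (Lab : Type) where
  addr : Int
  lab : Lab
deriving DecidableEq

/-- A call-stack frame: saved (labeled) return pc, saved register file,
result register, and result label. -/
structure Frame (Lab : Type) where
  retpc : LPC Lab
  savedRegs : List (Atom Lab)
  retReg : ℕ
  retLab : Lab

/-- A memory block: a list of labeled values together with the block label. -/
abbrev Block (Lab : Type) := List (Atom Lab) × Lab

/-- Block-structured memory with per-level allocation: for each stamp, the
list of blocks allocated with that stamp (in allocation order). -/
abbrev Mem (Lab : Type) := Lab → List (Block Lab)

/-- Instructions of the register machine. -/
inductive RInstr (Lab : Type) where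
  | Put (n : Int) (rd : ℕ)
  | Mov (rs rd : ℕ)
  | Load (rp rd : ℕ)
  | Store (rp rs : ℕ)
  | Add (r1 r2 rd : ℕ)
  | Mult (r1 r2 rd : ℕ)
  | Noop
  | Halt
  | Jump (r : ℕ)
  | BranchNZ (n : Int) (r : ℕ)
  | Call (r1 r2 r3 : ℕ)
  | Return
  | PutLabel (ℓ : Lab) (rd : ℕ)
  | LabelOf (rs rd : ℕ)
  | PcLabel (rd : ℕ)
  | Join (r1 r2 rd : ℕ)
  | FlowsTo (r1 r2 rd : ℕ)
  | Alloc (rn rl rd : ℕ)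
  | Write (rp rs : ℕ)
  | Upgrade (rp rl : ℕ)
  | Eq (r1 r2 rd : ℕ)
  | GetOffset (rp rd : ℕ)
  | SetOffset (rp ro rd : ℕ)
  | GetBlockSize (rp rd : ℕ)
  | GetBlockLabel (rp rd : ℕ)

/-- A register-machine state. -/
structure RState (Lab : Type) where
  pc : LPC Lab
  rf : List (Atom Lab)
  cs : List (Frame Lab)
  mem : Mem Lab
  imem : List (RInstr Lab)

/-- Lookup a list at an integer index. -/
def getI {α : Type} (xs : List α) (i : Int) : Option α :=
  if 0 ≤ i then xs[i.toNat]? else none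

/-- Update a list at an integer index. -/
def setI {α : Type} (xs : List α) (i : Int) (a : α) : List α :=
  if 0 ≤ i then xs.set i.toNat a else xs

section Machine

variable {Lab : Type} [Lattice Lab] [OrderBot Lab] [DecidableEq Lab]
variable [DecidableRel ((· ≤ ·) : Lab → Lab → Prop)]

/-- Lookup a memory at a block identifier. -/
def mget (m : Mem Lab) (b : Bid Lab) : Option (Block Lab) := (m b.1)[b.2]?

/-- Update a memory at a block identifier. -/
def mset (m : Mem Lab) (b : Bid Lab) (blk : Block Lab) : Mem Lab :=
  fun σ => if σ = b.1 then (m σ).set b.2 blk else m σ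

/-- The fresh block identifier for stamp `σ`: the first unallocated index. -/
def fresh (m : Mem Lab) (σ : Lab) : Bid Lab := (σ, (m σ).length)

/-- Allocate a new block with stamp `σ`. -/
def allocMem (m : Mem Lab) (σ : Lab) (blk : Block Lab) : Mem Lab :=
  fun σ' => if σ' = σ then m σ' ++ [blk] else m σ'

/-- The current instruction of a state. -/
def instrAt (S : RState Lab) : Option (RInstr Lab) := getI S.imem S.pc.addr

/-- The step relation of the information-flow register machine. -/
inductive RStep : RState Lab → RState Lab → Prop where
  | put {S : RState Lab} {n rd} :
      instrAt S = some (.Put n rd) →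
      RStep S { S with pc := ⟨S.pc.addr + 1, S.pc.lab⟩,
                       rf := S.rf.set rd ⟨.int n, ⊥⟩ }
  | putLabel {S : RState Lab} {ℓ rd} :
      instrAt S = some (.PutLabel ℓ rd) →
      RStep S { S with pc := ⟨S.pc.addr + 1, S.pc.lab⟩,
                       rf := S.rf.set rd ⟨.lab ℓ, ⊥⟩ }
  | mov {S : RState Lab} {rs rd a} :
      instrAt S = some (.Mov rs rd) →
      S.rf[rs]? = some a →
      RStep S { S with pc := ⟨S.pc.addr + 1, S.pc.lab⟩, rf := S.rf.set rd a }
  | load {S : RState Lab} {rp rd b o ℓp vs ℓb v ℓv} :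
      instrAt S = some (.Load rp rd) →
      S.rf[rp]? = some ⟨.ptr b o, ℓp⟩ →
      mget S.mem b = some (vs, ℓb) →
      getI vs o = some ⟨v, ℓv⟩ →
      RStep S { S with pc := ⟨S.pc.addr + 1, S.pc.lab ⊔ ℓp ⊔ ℓb⟩,
                       rf := S.rf.set rd ⟨v, ℓv⟩ }
  | store {S : RState Lab} {rp rs b o ℓp v ℓv vs ℓb} :
      instrAt S = some (.Store rp rs) →
      S.rf[rp]? = some ⟨.ptr b o, ℓp⟩ →
      S.rf[rs]? = some ⟨v, ℓv⟩ →
      mget S.mem b = some (vs, ℓb) →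
      S.pc.lab ⊔ ℓp ≤ ℓb →
      RStep S { S with pc := ⟨S.pc.addr + 1, S.pc.lab⟩,
                       mem := mset S.mem b (setI vs o ⟨v, ℓv⟩, ℓb) }
  | write {S : RState Lab} {rp rs b o ℓp v ℓv vs ℓb v' ℓv'} :
      instrAt S = some (.Write rp rs) →
      S.rf[rp]? = some ⟨.ptr b o, ℓp⟩ →
      S.rf[rs]? = some ⟨v, ℓv⟩ →
      mget S.mem b = some (vs, ℓb) →
      getI vs o = some ⟨v', ℓv'⟩ →
      S.pc.lab ⊔ ℓp ⊔ ℓv ≤ ℓb ⊔ ℓv' →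
      RStep S { S with pc := ⟨S.pc.addr + 1, S.pc.lab⟩,
                       mem := mset S.mem b (setI vs o ⟨v, ℓv'⟩, ℓb) }
  | upgrade {S : RState Lab} {rp rl b o ℓp ℓ ℓ' vs ℓb v' ℓv'} :
      instrAt S = some (.Upgrade rp rl) →
      S.rf[rp]? = some ⟨.ptr b o, ℓp⟩ →
      S.rf[rl]? = some ⟨.lab ℓ, ℓ'⟩ →
      mget S.mem b = some (vs, ℓb) →
      getI vs o = some ⟨v', ℓv'⟩ →
      ℓv' ≤ ℓ ⊔ ℓb →
      (S.pc.lab ⊔ ℓ') ⊔ ℓp ≤ ℓb →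
      RStep S { S with pc := ⟨S.pc.addr + 1, S.pc.lab ⊔ ℓ'⟩,
                       mem := mset S.mem b (setI vs o ⟨v', ℓ⟩, ℓb) }
  | alloc {S : RState Lab} {rn rl rd n ℓn ℓ ℓ'} :
      instrAt S = some (.Alloc rn rl rd) →
      S.rf[rn]? = some ⟨.int n, ℓn⟩ →
      0 < n →
      S.rf[rl]? = some ⟨.lab ℓ, ℓ'⟩ →
      RStep S { S with pc := ⟨S.pc.addr + 1, S.pc.lab⟩,
                       rf := S.rf.set rd
                         ⟨.ptr (fresh S.mem (S.pc.lab ⊔ ℓn ⊔ ℓ')) 0, ℓn ⊔ ℓ'⟩,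
                       mem := allocMem S.mem (S.pc.lab ⊔ ℓn ⊔ ℓ')
                         (List.replicate n.toNat ⟨.int 0, ⊥⟩, ℓ) }
  | add {S : RState Lab} {r1 r2 rd n1 ℓ1 n2 ℓ2} :
      instrAt S = some (.Add r1 r2 rd) →
      S.rf[r1]? = some ⟨.int n1, ℓ1⟩ →
      S.rf[r2]? = some ⟨.int n2, ℓ2⟩ →
      RStep S { S with pc := ⟨S.pc.addr + 1, S.pc.lab⟩,
                       rf := S.rf.set rd ⟨.int (n1 + n2), ℓ1 ⊔ ℓ2⟩ }
  | mult {S : RState Lab} {r1 r2 rd n1 ℓ1 n2 ℓ2} :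
      instrAt S = some (.Mult r1 r2 rd) →
      S.rf[r1]? = some ⟨.int n1, ℓ1⟩ →
      S.rf[r2]? = some ⟨.int n2, ℓ2⟩ →
      RStep S { S with pc := ⟨S.pc.addr + 1, S.pc.lab⟩,
                       rf := S.rf.set rd ⟨.int (n1 * n2), ℓ1 ⊔ ℓ2⟩ }
  | eq {S : RState Lab} {r1 r2 rd v1 ℓ1 v2 ℓ2} :
      instrAt S = some (.Eq r1 r2 rd) →
      S.rf[r1]? = some ⟨v1, ℓ1⟩ →
      S.rf[r2]? = some ⟨v2, ℓ2⟩ →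
      RStep S { S with pc := ⟨S.pc.addr + 1, S.pc.lab⟩,
                       rf := S.rf.set rd ⟨.int (if v1 = v2 then 1 else 0), ℓ1 ⊔ ℓ2⟩ }
  | noop {S : RState Lab} :
      instrAt S = some .Noop →
      RStep S { S with pc := ⟨S.pc.addr + 1, S.pc.lab⟩ }
  | jump {S : RState Lab} {r n ℓn} :
      instrAt S = some (.Jump r) →
      S.rf[r]? = some ⟨.int n, ℓn⟩ →
      RStep S { S with pc := ⟨n, ℓn ⊔ S.pc.lab⟩ }
  | branchNZ {S : RState Lab} {n r k ℓ} :
      instrAt S = some (.BranchNZ n r) →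
      S.rf[r]? = some ⟨.int k, ℓ⟩ →
      RStep S { S with pc := ⟨if k = 0 then S.pc.addr + 1 else S.pc.addr + n,
                              S.pc.lab ⊔ ℓ⟩ }
  | call {S : RState Lab} {r1 r2 r3 n ℓn ℓ ℓ'} :
      instrAt S = some (.Call r1 r2 r3) →
      S.rf[r1]? = some ⟨.int n, ℓn⟩ →
      S.rf[r3]? = some ⟨.lab ℓ, ℓ'⟩ →
      RStep S { S with pc := ⟨n, S.pc.lab ⊔ ℓn⟩,
                       cs := ⟨⟨S.pc.addr + 1, S.pc.lab ⊔ ℓ'⟩, S.rf, r2, ℓ⟩ :: S.cs }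
  | ret {S : RState Lab} {f : Frame Lab} {cs' v ℓ} :
      instrAt S = some .Return →
      S.cs = f :: cs' →
      S.rf[f.retReg]? = some ⟨v, ℓ⟩ →
      ℓ ⊔ S.pc.lab ≤ f.retLab ⊔ f.retpc.lab →
      RStep S { S with pc := f.retpc,
                       rf := f.savedRegs.set f.retReg ⟨v, f.retLab⟩,
                       cs := cs' }
  | labelOf {S : RState Lab} {rs rd v ℓ} :
      instrAt S = some (.LabelOf rs rd) →
      S.rf[rs]? = some ⟨v, ℓ⟩ →
      RStep S { S with pc := ⟨S.pc.addr + 1, S.pc.lab⟩,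
                       rf := S.rf.set rd ⟨.lab ℓ, ⊥⟩ }
  | pcLabel {S : RState Lab} {rd} :
      instrAt S = some (.PcLabel rd) →
      RStep S { S with pc := ⟨S.pc.addr + 1, S.pc.lab⟩,
                       rf := S.rf.set rd ⟨.lab S.pc.lab, ⊥⟩ }
  | join {S : RState Lab} {r1 r2 rd ℓ1 ℓ1' ℓ2 ℓ2'} :
      instrAt S = some (.Join r1 r2 rd) →
      S.rf[r1]? = some ⟨.lab ℓ1, ℓ1'⟩ →
      S.rf[r2]? = some ⟨.lab ℓ2, ℓ2'⟩ →
      RStep S { S with pc := ⟨S.pc.addr + 1, S.pc.lab⟩,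
                       rf := S.rf.set rd ⟨.lab (ℓ1 ⊔ ℓ2), ℓ1' ⊔ ℓ2'⟩ }
  | flowsTo {S : RState Lab} {r1 r2 rd ℓ1 ℓ1' ℓ2 ℓ2'} :
      instrAt S = some (.FlowsTo r1 r2 rd) →
      S.rf[r1]? = some ⟨.lab ℓ1, ℓ1'⟩ →
      S.rf[r2]? = some ⟨.lab ℓ2, ℓ2'⟩ →
      RStep S { S with pc := ⟨S.pc.addr + 1, S.pc.lab⟩,
                       rf := S.rf.set rd
                         ⟨.int (if ℓ1 ≤ ℓ2 then 1 else 0), ℓ1' ⊔ ℓ2'⟩ }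
  | getOffset {S : RState Lab} {rp rd b o ℓp} :
      instrAt S = some (.GetOffset rp rd) →
      S.rf[rp]? = some ⟨.ptr b o, ℓp⟩ →
      RStep S { S with pc := ⟨S.pc.addr + 1, S.pc.lab⟩,
                       rf := S.rf.set rd ⟨.int o, ℓp⟩ }
  | setOffset {S : RState Lab} {rp ro rd b o' ℓp o ℓo} :
      instrAt S = some (.SetOffset rp ro rd) →
      S.rf[rp]? = some ⟨.ptr b o', ℓp⟩ →
      S.rf[ro]? = some ⟨.int o, ℓo⟩ →
      RStep S { S with pc := ⟨S.pc.addr + 1, S.pc.lab⟩,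
                       rf := S.rf.set rd ⟨.ptr b o, ℓp ⊔ ℓo⟩ }
  | getBlockSize {S : RState Lab} {rp rd b o ℓp vs ℓb} :
      instrAt S = some (.GetBlockSize rp rd) →
      S.rf[rp]? = some ⟨.ptr b o, ℓp⟩ →
      mget S.mem b = some (vs, ℓb) →
      RStep S { S with pc := ⟨S.pc.addr + 1, S.pc.lab ⊔ ℓp⟩,
                       rf := S.rf.set rd ⟨.int vs.length, ℓb⟩ }
  | getBlockLabel {S : RState Lab} {rp rd b o ℓp vs ℓb} :
      instrAt S = some (.GetBlockLabel rp rd) →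
      S.rf[rp]? = some ⟨.ptr b o, ℓp⟩ →
      mget S.mem b = some (vs, ℓb) →
      RStep S { S with pc := ⟨S.pc.addr + 1, S.pc.lab⟩,
                       rf := S.rf.set rd ⟨.lab ℓb, ℓp⟩ }

/-- The blocks directly accessible at level `ℓ` from a list of atoms. -/
def blocksIn (ℓ : Lab) (atoms : List (Atom Lab)) (b : Bid Lab) : Prop :=
  ∃ o ℓv, (⟨.ptr b o, ℓv⟩ : Atom Lab) ∈ atoms ∧ ℓv ≤ ℓ

/-- The root set of a state at observation level `ℓ`. -/
def rootSet (ℓ : Lab) (S : RState Lab) (b : Bid Lab) : Prop :=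
  (S.pc.lab ≤ ℓ ∧ blocksIn ℓ S.rf b) ∨
  ∃ f ∈ S.cs, f.retpc.lab ≤ ℓ ∧ blocksIn ℓ f.savedRegs b

/-- Direct links between blocks visible at level `ℓ`. -/
def link (ℓ : Lab) (m : Mem Lab) (b b' : Bid Lab) : Prop :=
  ∃ vs ℓb, mget m b = some (vs, ℓb) ∧ ℓb ≤ ℓ ∧ blocksIn ℓ vs b'

/-- A state is well-stamped if every block reachable at level `ℓ` from the
root set at `ℓ` has a stamp flowing to `ℓ`. -/
def WellStamped (S : RState Lab) : Prop :=
  ∀ ℓ b b', rootSet ℓ S b → Relation.ReflTransGen (link ℓ S.mem) b b' →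
    b'.1 ≤ ℓ

end Machine

section PreservationHelpers
set_option linter.unusedSectionVars false

variable {Lab : Type} [Lattice Lab] [OrderBot Lab] [DecidableEq Lab]
variable [DecidableRel ((· ≤ ·) : Lab → Lab → Prop)]

lemma mem_of_getI' {α : Type} {xs : List α} {i : Int} {a : α}
    (h : getI xs i = some a) : a ∈ xs := by
  unfold getI at h
  split at h
  · exact List.mem_of_getElem? h
  · simp at h

lemma mem_of_setI' {α : Type} {xs : List α} {i : Int} {v a : α}
    (h : a ∈ setI xs i v) : a ∈ xs ∨ a = v := by
  unfold setI at h
  split at h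
  · exact List.mem_or_eq_of_mem_set h
  · exact Or.inl h

lemma blocksIn_of_set {ℓ : Lab} {xs : List (Atom Lab)} {i : ℕ} {a : Atom Lab} {b : Bid Lab}
    (h : blocksIn ℓ (xs.set i a) b) :
    blocksIn ℓ xs b ∨ ((∃ o, a.val = .ptr b o) ∧ a.lab ≤ ℓ) := by
  obtain ⟨o, ℓv, hmem, hle⟩ := h
  rcases List.mem_or_eq_of_mem_set hmem with h | h
  · exact Or.inl ⟨o, ℓv, h, hle⟩
  · subst h
    exact Or.inr ⟨⟨o, rfl⟩, hle⟩

lemma blocksIn_of_setI {ℓ : Lab} {xs : List (Atom Lab)} {i : Int} {a : Atom Lab} {b : Bid Lab}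
    (h : blocksIn ℓ (setI xs i a) b) :
    blocksIn ℓ xs b ∨ ((∃ o, a.val = .ptr b o) ∧ a.lab ≤ ℓ) := by
  obtain ⟨o, ℓv, hmem, hle⟩ := h
  rcases mem_of_setI' hmem with h | h
  · exact Or.inl ⟨o, ℓv, h, hle⟩
  · subst h
    exact Or.inr ⟨⟨o, rfl⟩, hle⟩

lemma mget_mset_self {m : Mem Lab} {b : Bid Lab} {blk blk' : Block Lab}
    (h : mget m b = some blk') :
    mget (mset m b blk) b = some blk := by
  have hlt : b.2 < (m b.1).length := (List.getElem?_eq_some_iff.mp h).1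
  simp [mget, mset, List.getElem?_set_self hlt]

lemma mget_mset_ne {m : Mem Lab} {b x : Bid Lab} {blk : Block Lab} (h : x ≠ b) :
    mget (mset m b blk) x = mget m x := by
  unfold mget mset
  by_cases h1 : x.1 = b.1
  · rw [if_pos h1]
    have h2 : b.2 ≠ x.2 := fun he => h (Prod.ext h1 he.symm)
    rw [List.getElem?_set_ne h2]
  · rw [if_neg h1]

lemma mget_alloc_self {m : Mem Lab} {σ : Lab} {blk : Block Lab} :
    mget (allocMem m σ blk) (fresh m σ) = some blk := by
  simp [mget, allocMem, fresh]

lemma mget_alloc_ne {m : Mem Lab} {σ : Lab} {blk : Block Lab} {x : Bid Lab}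
    (h : x ≠ fresh m σ) :
    mget (allocMem m σ blk) x = mget m x := by
  unfold mget allocMem fresh at *
  by_cases h1 : x.1 = σ
  · rw [if_pos h1]
    have h2 : x.2 ≠ (m σ).length := fun he => h (Prod.ext h1 he)
    rcases Nat.lt_or_ge x.2 (m x.1).length with hlt | hge
    · rw [List.getElem?_append_left hlt]
    · have hgt : (m x.1).length < x.2 :=
        lt_of_le_of_ne hge (fun he => h2 (by rw [← he, h1]))
      rw [List.getElem?_eq_none (by simpa using hgt),
          List.getElem?_eq_none (le_of_lt hgt)]
  · rw [if_neg h1]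

/-- The main engine: to show preservation it suffices that every new root is
reachable from an old root (or is a terminal low block), and every new link is
an old link, lands on an old root, or lands on a terminal low block. -/
lemma ws_engine {S S' : RState Lab} (hws : WellStamped S)
    (hroot : ∀ ℓ b, rootSet ℓ S' b →
      (∃ r, rootSet ℓ S r ∧ Relation.ReflTransGen (link ℓ S.mem) r b) ∨
      (b.1 ≤ ℓ ∧ ∀ y, ¬ link ℓ S'.mem b y))
    (hlink : ∀ ℓ x y, link ℓ S'.mem x y →
      link ℓ S.mem x y ∨ rootSet ℓ S y ∨ (y.1 ≤ ℓ ∧ ∀ z, ¬ link ℓ S'.mem y z)) :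
    WellStamped S' := by
  intro ℓ b b' hb hreach
  have key : (∃ r, rootSet ℓ S r ∧ Relation.ReflTransGen (link ℓ S.mem) r b') ∨
      (b'.1 ≤ ℓ ∧ ∀ y, ¬ link ℓ S'.mem b' y) := by
    induction hreach with
    | refl => exact hroot ℓ b hb
    | tail h1 h2 ih =>
      rcases ih with ⟨r, hr, hrtg⟩ | ⟨_, hno⟩
      · rcases hlink ℓ _ _ h2 with h | h | h
        · exact Or.inl ⟨r, hr, hrtg.tail h⟩
        · exact Or.inl ⟨_, h, Relation.ReflTransGen.refl⟩
        · exact Or.inr h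
      · exact absurd h2 (hno _)
  rcases key with ⟨r, hr, hrtg⟩ | ⟨h, _⟩
  · exact hws ℓ r b' hr hrtg
  · exact h

lemma blocksIn_of_lookup {ℓ : Lab} {rf : List (Atom Lab)} {r : ℕ} {b : Bid Lab} {o : Int} {ℓp : Lab}
    (h : rf[r]? = some ⟨.ptr b o, ℓp⟩) (hle : ℓp ≤ ℓ) : blocksIn ℓ rf b :=
  ⟨o, ℓp, List.mem_of_getElem? h, hle⟩

/-- Common pattern: only the pc (label raised) and one register change. -/
lemma ws_set_reg {S : RState Lab} {na : Int} {ℓpc' : Lab} {rd : ℕ} {a : Atom Lab}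
    (hws : WellStamped S) (hpc : S.pc.lab ≤ ℓpc')
    (ha : ∀ ℓ b, ℓpc' ≤ ℓ → (∃ o, a.val = .ptr b o) → a.lab ≤ ℓ →
        ∃ r, rootSet ℓ S r ∧ Relation.ReflTransGen (link ℓ S.mem) r b) :
    WellStamped { S with pc := ⟨na, ℓpc'⟩, rf := S.rf.set rd a } := by
  apply ws_engine hws
  · intro ℓ b hb
    rcases hb with ⟨hl, hbl⟩ | hcs
    · rcases blocksIn_of_set hbl with h | ⟨hp, hlab⟩
      · exact Or.inl ⟨b, Or.inl ⟨le_trans hpc hl, h⟩, Relation.ReflTransGen.refl⟩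
      · exact Or.inl (ha ℓ b hl hp hlab)
    · exact Or.inl ⟨b, Or.inr hcs, Relation.ReflTransGen.refl⟩
  · intro ℓ x y h
    exact Or.inl h

/-- Common pattern: only the pc changes (label raised). -/
lemma ws_pc {S : RState Lab} {na : Int} {ℓpc' : Lab}
    (hws : WellStamped S) (hpc : S.pc.lab ≤ ℓpc') :
    WellStamped { S with pc := ⟨na, ℓpc'⟩ } := by
  apply ws_engine hws
  · intro ℓ b hb
    rcases hb with ⟨hl, hbl⟩ | hcs
    · exact Or.inl ⟨b, Or.inl ⟨le_trans hpc hl, hbl⟩, Relation.ReflTransGen.refl⟩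
    · exact Or.inl ⟨b, Or.inr hcs, Relation.ReflTransGen.refl⟩
  · intro ℓ x y h
    exact Or.inl h

end PreservationHelpers

/-- The well-stamped invariant is preserved by execution of the register
machine (over any finite label lattice). -/
theorem wellStamped_preservation
    {Lab : Type} [Lattice Lab] [OrderBot Lab] [DecidableEq Lab]
    [DecidableRel ((· ≤ ·) : Lab → Lab → Prop)] [Fintype Lab]
    (S S' : RState Lab) (hws : WellStamped S) (hstep : RStep S S') :
    WellStamped S' := by
  cases hstep with
  | put h =>
      exact ws_set_reg hws le_rfl (by rintro ℓ b - ⟨o, ho⟩ -; cases ho)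
  | putLabel h =>
      exact ws_set_reg hws le_rfl (by rintro ℓ b - ⟨o, ho⟩ -; cases ho)
  | mov h hrs =>
      refine ws_set_reg hws le_rfl ?_
      rintro ℓ b hl ⟨o, ho⟩ hlab
      rename_i rs rd a
      obtain ⟨av, al⟩ := a
      cases ho
      exact ⟨_, Or.inl ⟨hl, blocksIn_of_lookup hrs hlab⟩, Relation.ReflTransGen.refl⟩
  | load h hrp hm hget =>
      refine ws_set_reg hws (le_trans le_sup_left le_sup_left) ?_
      rintro ℓ0 b'' hl ⟨o'', ho⟩ hlab
      cases ho
      have hpcle : S.pc.lab ≤ ℓ0 := le_trans (le_trans le_sup_left le_sup_left) hl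
      have hple : _ ≤ ℓ0 := le_trans (le_trans le_sup_right le_sup_left) hl
      have hble : _ ≤ ℓ0 := le_trans le_sup_right hl
      refine ⟨_, Or.inl ⟨hpcle, blocksIn_of_lookup hrp hple⟩,
        Relation.ReflTransGen.single ?_⟩
      exact ⟨_, _, hm, hble, o'', _, mem_of_getI' hget, hlab⟩
  | store h hrp hrs hm hchk =>
      apply ws_engine hws
      · intro ℓ0 b0 hb
        exact Or.inl ⟨b0, hb, Relation.ReflTransGen.refl⟩
      · intro ℓ0 x y hxy
        obtain ⟨ws, ℓw, hg, hwle, hbl⟩ := hxy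
        rename_i b o ℓp v ℓv vs ℓb
        by_cases hx : x = b
        · subst hx
          rw [mget_mset_self hm] at hg
          obtain ⟨h1, h2⟩ := Prod.mk.injEq .. ▸ Option.some.inj hg
          subst h1; subst h2
          rcases blocksIn_of_setI hbl with hold | ⟨⟨o'', ho⟩, hlab⟩
          · exact Or.inl ⟨vs, ℓb, hm, hwle, hold⟩
          · cases ho
            refine Or.inr (Or.inl (Or.inl ⟨?_, blocksIn_of_lookup hrs hlab⟩))
            exact le_trans le_sup_left (le_trans hchk hwle)
        · rw [mget_mset_ne hx] at hg
          exact Or.inl ⟨ws, ℓw, hg, hwle, hbl⟩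
  | write h hrp hrs hm hget hchk =>
      apply ws_engine hws
      · intro ℓ0 b0 hb
        exact Or.inl ⟨b0, hb, Relation.ReflTransGen.refl⟩
      · intro ℓ0 x y hxy
        obtain ⟨ws, ℓw, hg, hwle, hbl⟩ := hxy
        rename_i b o ℓp v ℓv vs ℓb v' ℓv'
        by_cases hx : x = b
        · subst hx
          rw [mget_mset_self hm] at hg
          obtain ⟨h1, h2⟩ := Prod.mk.injEq .. ▸ Option.some.inj hg
          subst h1; subst h2
          rcases blocksIn_of_setI hbl with hold | ⟨⟨o'', ho⟩, hlab⟩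
          · exact Or.inl ⟨vs, ℓb, hm, hwle, hold⟩
          · cases ho
            have hall : S.pc.lab ⊔ ℓp ⊔ ℓv ≤ ℓ0 :=
              le_trans hchk (sup_le hwle hlab)
            refine Or.inr (Or.inl (Or.inl ⟨le_trans (le_trans le_sup_left le_sup_left) hall, ?_⟩))
            exact blocksIn_of_lookup hrs (le_trans le_sup_right hall)
        · rw [mget_mset_ne hx] at hg
          exact Or.inl ⟨ws, ℓw, hg, hwle, hbl⟩
  | upgrade h hrp hrl hm hget hup hchk =>
      apply ws_engine hws
      · intro ℓ0 b0 hb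
        rcases hb with ⟨hl, hbl⟩ | hcs
        · exact Or.inl ⟨b0, Or.inl ⟨le_trans le_sup_left hl, hbl⟩, Relation.ReflTransGen.refl⟩
        · exact Or.inl ⟨b0, Or.inr hcs, Relation.ReflTransGen.refl⟩
      · intro ℓ0 x y hxy
        obtain ⟨ws, ℓw, hg, hwle, hbl⟩ := hxy
        rename_i b o ℓp ℓu ℓ' vs ℓb v' ℓv'
        by_cases hx : x = b
        · subst hx
          rw [mget_mset_self hm] at hg
          obtain ⟨h1, h2⟩ := Prod.mk.injEq .. ▸ Option.some.inj hg
          subst h1; subst h2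
          rcases blocksIn_of_setI hbl with hold | ⟨⟨o'', ho⟩, hlab⟩
          · exact Or.inl ⟨vs, ℓb, hm, hwle, hold⟩
          · cases ho
            have hvle : ℓv' ≤ ℓ0 := le_trans hup (sup_le hlab hwle)
            exact Or.inl ⟨vs, ℓb, hm, hwle, o'', ℓv', mem_of_getI' hget, hvle⟩
        · rw [mget_mset_ne hx] at hg
          exact Or.inl ⟨ws, ℓw, hg, hwle, hbl⟩
  | alloc h hrn hn hrl =>
      rename_i rn rl rd n ℓn ℓu ℓ'
      apply ws_engine hws
      · intro ℓ0 b0 hb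
        have hnol : ∀ y, ¬ link ℓ0
            (allocMem S.mem (S.pc.lab ⊔ ℓn ⊔ ℓ')
              (List.replicate n.toNat ⟨.int 0, ⊥⟩, ℓu))
            (fresh S.mem (S.pc.lab ⊔ ℓn ⊔ ℓ')) y := by
          intro y hy
          obtain ⟨ws, ℓw, hg, hwle, o', ℓv, hmem, hvle⟩ := hy
          rw [mget_alloc_self] at hg
          obtain ⟨h1, h2⟩ := Prod.mk.injEq .. ▸ Option.some.inj hg
          subst h1
          have := List.eq_of_mem_replicate hmem
          simp at this
        rcases hb with ⟨hl, hbl⟩ | hcs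
        · rcases blocksIn_of_set hbl with hold | ⟨⟨o'', ho⟩, hlab⟩
          · exact Or.inl ⟨b0, Or.inl ⟨hl, hold⟩, Relation.ReflTransGen.refl⟩
          · cases ho
            refine Or.inr ⟨?_, hnol⟩
            exact sup_le (sup_le hl (le_trans le_sup_left hlab))
              (le_trans le_sup_right hlab)
        · exact Or.inl ⟨b0, Or.inr hcs, Relation.ReflTransGen.refl⟩
      · intro ℓ0 x y hxy
        by_cases hx : x = fresh S.mem (S.pc.lab ⊔ ℓn ⊔ ℓ')
        · subst hx
          obtain ⟨ws, ℓw, hg, hwle, o', ℓv, hmem, hvle⟩ := hxy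
          rw [mget_alloc_self] at hg
          obtain ⟨h1, h2⟩ := Prod.mk.injEq .. ▸ Option.some.inj hg
          subst h1
          have := List.eq_of_mem_replicate hmem
          simp at this
        · obtain ⟨ws, ℓw, hg, hwle, hbl⟩ := hxy
          rw [mget_alloc_ne hx] at hg
          exact Or.inl ⟨ws, ℓw, hg, hwle, hbl⟩
  | add h h1 h2 =>
      exact ws_set_reg hws le_rfl (by rintro ℓ b - ⟨o, ho⟩ -; cases ho)
  | mult h h1 h2 =>
      exact ws_set_reg hws le_rfl (by rintro ℓ b - ⟨o, ho⟩ -; cases ho)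
  | eq h h1 h2 =>
      exact ws_set_reg hws le_rfl (by rintro ℓ b - ⟨o, ho⟩ -; cases ho)
  | noop h =>
      exact ws_pc hws le_rfl
  | jump h h1 =>
      exact ws_pc hws le_sup_right
  | branchNZ h h1 =>
      exact ws_pc hws le_sup_left
  | call h h1 h3 =>
      apply ws_engine hws
      · intro ℓ0 b0 hb
        rcases hb with ⟨hl, hbl⟩ | ⟨f', hf', hl', hbl'⟩
        · exact Or.inl ⟨b0, Or.inl ⟨le_trans le_sup_left hl, hbl⟩,
            Relation.ReflTransGen.refl⟩
        · rcases List.mem_cons.mp hf' with he | hmem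
          · subst he
            exact Or.inl ⟨b0, Or.inl ⟨le_trans le_sup_left hl', hbl'⟩,
              Relation.ReflTransGen.refl⟩
          · exact Or.inl ⟨b0, Or.inr ⟨f', hmem, hl', hbl'⟩,
              Relation.ReflTransGen.refl⟩
      · intro ℓ0 x y hxy
        exact Or.inl hxy
  | ret h hcs hlook hflow =>
      rename_i f cs' v ℓr
      apply ws_engine hws
      · intro ℓ0 b0 hb
        rcases hb with ⟨hl, hbl⟩ | ⟨f', hf', hl', hbl'⟩
        · rcases blocksIn_of_set hbl with hold | ⟨⟨o'', ho⟩, hlab⟩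
          · refine Or.inl ⟨b0, Or.inr ⟨f, ?_, hl, hold⟩, Relation.ReflTransGen.refl⟩
            rw [hcs]; exact List.mem_cons_self
          · cases ho
            have hall : ℓr ⊔ S.pc.lab ≤ ℓ0 := le_trans hflow (sup_le hlab hl)
            exact Or.inl ⟨_, Or.inl ⟨le_trans le_sup_right hall,
              blocksIn_of_lookup hlook (le_trans le_sup_left hall)⟩,
              Relation.ReflTransGen.refl⟩
        · refine Or.inl ⟨b0, Or.inr ⟨f', ?_, hl', hbl'⟩, Relation.ReflTransGen.refl⟩
          rw [hcs]; exact List.mem_cons_of_mem _ hf'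
      · intro ℓ0 x y hxy
        exact Or.inl hxy
  | labelOf h h1 =>
      exact ws_set_reg hws le_rfl (by rintro ℓ b - ⟨o, ho⟩ -; cases ho)
  | pcLabel h =>
      exact ws_set_reg hws le_rfl (by rintro ℓ b - ⟨o, ho⟩ -; cases ho)
  | join h h1 h2 =>
      exact ws_set_reg hws le_rfl (by rintro ℓ b - ⟨o, ho⟩ -; cases ho)
  | flowsTo h h1 h2 =>
      exact ws_set_reg hws le_rfl (by rintro ℓ b - ⟨o, ho⟩ -; cases ho)
  | getOffset h h1 =>
      exact ws_set_reg hws le_rfl (by rintro ℓ b - ⟨o, ho⟩ -; cases ho)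
  | setOffset h h1 h2 =>
      refine ws_set_reg hws le_rfl ?_
      rintro ℓ0 b0 hl ⟨o'', ho⟩ hlab
      cases ho
      exact ⟨_, Or.inl ⟨hl, blocksIn_of_lookup h1 (le_trans le_sup_left hlab)⟩,
        Relation.ReflTransGen.refl⟩
  | getBlockSize h h1 hm =>
      exact ws_set_reg hws le_sup_left (by rintro ℓ b - ⟨o, ho⟩ -; cases ho)
  | getBlockLabel h h1 hm =>
      exact ws_set_reg hws le_rfl (by rintro ℓ b - ⟨o, ho⟩ -; cases ho)
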